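/- Let n > 1 and ω(a,b) = a/n + b + ((2n+1)/n)·max{0,-a,-b}. For every integer i with 0 ≤ i ≤ n-1, the only (a,b) ∈ ℤ² with ω(a,b) = i/n is (a,b) = (i,0). -/

import Mathlib

/-- For `0 ≤ i ≤ n-1`, the only lattice point of weight `i/n` is `(i, 0)`. -/
theorem weight_fiber_small (n : ℤ) (hn : 1 < n) (ω : ℤ → ℤ → ℚ)
    (hω : ∀ a b : ℤ, ω a b =
      (a : ℚ) / (n : ℚ) + (b : ℚ) +
        ((2 * (n : ℚ) + 1) / (n : ℚ)) * max 0 (max (-(a : ℚ)) (-(b : ℚ))))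
    (i : ℤ) (hi0 : 0 ≤ i) (hi1 : i ≤ n - 1) (a b : ℤ) :
    ω a b = (i : ℚ) / (n : ℚ) ↔ a = i ∧ b = 0 := by
  have hn0 : (n : ℚ) ≠ 0 := by
    exact_mod_cast (by omega : n ≠ 0)
  set M : ℤ := max 0 (max (-a) (-b)) with hMdef
  have hMcast : ((M : ℤ) : ℚ) = max 0 (max (-(a : ℚ)) (-(b : ℚ))) := by
    simp [hMdef]
    rw [max_neg_neg]
  rw [hω, ← hMcast]
  have key : (a : ℚ) / n + b + (2 * (n:ℚ) + 1) / n * M = (i:ℚ) / n ↔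
      a + n * b + (2 * n + 1) * M = i := by
    constructor
    · intro h
      have h2 : (a : ℚ) + n * b + (2 * n + 1) * M = i := by
        field_simp at h; linarith
      exact_mod_cast h2
    · intro h
      have h2 : (a : ℚ) + n * b + (2 * n + 1) * M = i := by exact_mod_cast h
      field_simp
      linarith
  rw [key]
  constructor
  · intro h
    have hM0 : 0 ≤ M := le_max_left _ _
    have hMa : -a ≤ M := le_trans (le_max_left _ _) (le_max_right _ _)
    have hMb : -b ≤ M := le_trans (le_max_right _ _) (le_max_right _ _)
    rcases eq_or_lt_of_le hM0 with hM | hM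
    · -- M = 0, so a ≥ 0, b ≥ 0
      rw [← hM] at h hMa hMb
      simp at h
      have ha : 0 ≤ a := by omega
      have hb : 0 ≤ b := by omega
      rcases eq_or_lt_of_le hb with hb0 | hb1
      · constructor
        · nlinarith
        · omega
      · exfalso
        have : n * 1 ≤ n * b := by
          apply mul_le_mul_of_nonneg_left (by omega) (by omega)
        nlinarith
    · exfalso
      nlinarith [mul_le_mul_of_nonneg_left (show (1:ℤ) ≤ M by omega) (show (0:ℤ) ≤ n by omega),
        mul_le_mul_of_nonneg_left (show -M ≤ b by omega) (show (0:ℤ) ≤ n by omega)]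
  · rintro ⟨rfl, rfl⟩
    have : M = 0 := by
      simp [hMdef]
      omega
    rw [this]
    ring
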